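/- Let X be a topological space and suppose {x_α : α < κ} ⊆ X is a dense family of points such that the tightness t(x_α, X) ≤ κ for every α < κ. Then δ(X) ≤ κ, i.e., every dense subset of X has density at most κ. -/

import Mathlib

open Cardinal Set TopologicalSpace

universe u

/-- The density of a topological space: least cardinality of a dense subset. -/
noncomputable def densityCard (X : Type u) [TopologicalSpace X] : Cardinal.{u} :=
  sInf {c | ∃ D : Set X, Dense D ∧ #D = c}

/-- δ(X): the supremum of the densities of dense subspaces of `X`. -/
noncomputable def deltaCard (X : Type u) [TopologicalSpace X] : Cardinal.{u} :=
  ⨆ D : {D : Set X // Dense D}, densityCard ↥(D.1)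

/-- A π-base: a family of nonempty open sets such that every nonempty open set
contains a member of the family. -/
def IsPiBase {X : Type u} [TopologicalSpace X] (B : Set (Set X)) : Prop :=
  (∀ U ∈ B, IsOpen U ∧ U.Nonempty) ∧
  ∀ U : Set X, IsOpen U → U.Nonempty → ∃ V ∈ B, V ⊆ U

/-- The π-weight: least cardinality of a π-base. -/
noncomputable def piWeight (X : Type u) [TopologicalSpace X] : Cardinal.{u} :=
  sInf {c | ∃ B : Set (Set X), IsPiBase B ∧ #B = c}

/-- The weight: least cardinality of a base of the topology. -/
noncomputable def weightCard (X : Type u) [TopologicalSpace X] : Cardinal.{u} :=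
  sInf {c | ∃ B : Set (Set X), IsTopologicalBasis B ∧ #B = c}

/-- The set of points played by Player II before stage `β`. -/
def PlayedSet {X : Type u} (x : Ordinal.{u} → X) (β : Ordinal.{u}) : Set X :=
  {p | ∃ α < β, x α = p}

/-- Player I has a winning strategy in the open-point game `G_{X,θ}`:
there is a strategy `U` assigning to each history of points played by Player II a
nonempty open set (at positions where the played points are not yet dense), depending
only on the initial segment of the history, such that in every run in which Player II
plays legally, the set of played points becomes dense at some stage `β < θ`. -/
def PlayerIWins (X : Type u) [TopologicalSpace X] (θ : Ordinal.{u}) : Prop :=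
  ∃ U : (Ordinal.{u} → X) → Ordinal.{u} → Set X,
    (∀ x β, ¬ Dense (PlayedSet x β) → IsOpen (U x β) ∧ (U x β).Nonempty) ∧
    (∀ x y β, (∀ α < β, x α = y α) → U x β = U y β) ∧
    ∀ x : Ordinal.{u} → X, (∀ β < θ, ¬ Dense (PlayedSet x β) → x β ∈ U x β) →
      ∃ β < θ, Dense (PlayedSet x β)

/-- gd(X): the least infinite cardinal κ such that Player I has a winning strategy
in the open-point game `G_{X,κ⁺}`. -/
noncomputable def gd (X : Type u) [TopologicalSpace X] : Cardinal.{u} :=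
  sInf {κ | ℵ₀ ≤ κ ∧ PlayerIWins X (Order.succ κ).ord}

/-- If `X` has a dense family of at most `κ` points each of tightness
at most `κ`, then `δ(X) ≤ κ`. -/
theorem stmt3 {X : Type u} [TopologicalSpace X] (κ : Cardinal.{u}) (hκ : ℵ₀ ≤ κ)
    (S : Set X) (hSdense : Dense S) (hScard : #S ≤ κ)
    (htight : ∀ x ∈ S, ∀ Y : Set X, x ∈ closure Y →
      ∃ Z ⊆ Y, #Z ≤ κ ∧ x ∈ closure Z) :
    deltaCard X ≤ κ := by
  have : Nonempty {D : Set X // Dense D} := ⟨⟨univ, dense_univ⟩⟩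
  apply ciSup_le'
  rintro ⟨D, hD⟩
  -- for each x in S, pick Z x
  have hx : ∀ x : S, ∃ Z ⊆ D, #Z ≤ κ ∧ (x : X) ∈ closure Z := by
    intro x
    exact htight x x.2 D (by simp [hD.closure_eq])
  choose Z hZsub hZcard hZcl using hx
  set W : Set X := ⋃ x : S, Z x with hW
  have hWsub : W ⊆ D := iUnion_subset hZsub
  have hWcard : #W ≤ κ := by
    apply le_trans (Cardinal.mk_iUnion_le _)
    rcases isEmpty_or_nonempty S with hS | hS
    · haveI := hS
      rw [Cardinal.mk_eq_zero ↥S, zero_mul]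
      exact zero_le
    · calc #S * ⨆ x : S, #(Z x) ≤ κ * κ :=
            mul_le_mul' hScard (ciSup_le' fun x => hZcard x)
        _ = κ := Cardinal.mul_eq_self hκ
  have hWdense : Dense W := by
    rw [dense_iff_closure_eq]
    apply eq_univ_of_univ_subset
    rw [← hSdense.closure_eq]
    apply closure_minimal _ isClosed_closure
    rintro p hp
    exact closure_mono (subset_iUnion (fun x : S => Z x) ⟨p, hp⟩) (hZcl ⟨p, hp⟩)
  -- now density of D
  have hWD : Dense (Subtype.val ⁻¹' W : Set ↥D) := by
    rw [Topology.IsInducing.subtypeVal.dense_iff]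
    intro d
    have : (Subtype.val '' (Subtype.val ⁻¹' W : Set ↥D)) = W := by
      rw [Subtype.image_preimage_coe, inter_eq_right.mpr hWsub]
    rw [this]
    exact hWdense d
  calc densityCard ↥D ≤ #(Subtype.val ⁻¹' W : Set ↥D) :=
        csInf_le (OrderBot.bddBelow _) ⟨_, hWD, rfl⟩
    _ ≤ #W := Cardinal.mk_preimage_of_injective _ _ Subtype.val_injective
    _ ≤ κ := hWcard
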